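/- With FB-configurations in I_n defined by (FB0), (FB1), (FB2), for each subset S define the multivariate weight Π_{r=1}^n x_r^{t_r(S)}, where t_r(S) is the number of elements of S of the form (r, j). Then the sum of these weights over all FB-configurations S equals the polynomial h_n(x_1,...,x_n) = Π_{r=1}^n (Π_{s=1}^r (1+x_s) − 1). -/

import Mathlib

/-- The index set `I_n = {(i,j) : 1 ≤ i ≤ j ≤ n}`, as a finset of pairs of naturals. -/
def indexSet (n : ℕ) : Finset (ℕ × ℕ) :=
  (Finset.Icc 1 n ×ˢ Finset.Icc 1 n).filter (fun p => p.1 ≤ p.2)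

/-- The cohook of `(i,j)`: `{(k,j) : 1 ≤ k < i} ∪ {(i,ℓ) : j < ℓ ≤ n}`.
For `j = k - 1` with `2 ≤ k ≤ n` this is the virtual cohook
`{(m,k−1) : 1 ≤ m < k} ∪ {(k,ℓ) : k ≤ ℓ ≤ n}`. -/
def cohook (n i j : ℕ) : Finset (ℕ × ℕ) :=
  (Finset.Icc 1 n ×ˢ Finset.Icc 1 n).filter
    (fun p => (p.2 = j ∧ p.1 < i) ∨ (p.1 = i ∧ j < p.2))

/-- `S ⊆ I_n` is an FB-configuration if `(1,n) ∈ S`, each element `≠ (1,n)` of `S` has its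
cohook meeting `S`, and each virtual cohook (for `2 ≤ k ≤ n`) meets `S`. -/
def IsFB (n : ℕ) (S : Finset (ℕ × ℕ)) : Prop :=
  (1, n) ∈ S ∧
  (∀ p ∈ S, p ≠ (1, n) → (cohook n p.1 p.2 ∩ S).Nonempty) ∧
  (∀ k ∈ Finset.Icc 2 n, (cohook n k (k - 1) ∩ S).Nonempty)

instance (n : ℕ) : DecidablePred (IsFB n) := fun S => by
  unfold IsFB; infer_instance

open Finset MvPolynomial

/-! ### Auxiliary definitions -/

noncomputable def Pprod (k : ℕ) : MvPolynomial ℕ ℤ := ∏ s ∈ Finset.Icc 1 k, (1 + X s)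

noncomputable def Bfac (R : Finset ℕ) (k : ℕ) : MvPolynomial ℕ ℤ :=
  Pprod k - if k + 1 ∈ R then 0 else 1

/-- Validity of a column `C` relative to an escape set `R` and a flag `b`:
if `C` is nonempty its minimum lies in `R`, and if `C` is empty then `b` holds. -/
def valid (R : Finset ℕ) (b : Prop) (C : Finset ℕ) : Prop :=
  (∀ a ∈ C, (∀ x ∈ C, a ≤ x) → a ∈ R) ∧ (C = ∅ → b)

instance (R : Finset ℕ) (b : Prop) [Decidable b] : DecidablePred (valid R b) := fun C => by
  unfold valid; infer_instance

/-- Per-column condition generalizing `IsFB` with an escape set `R`. -/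
def Cond (m : ℕ) (R : Finset ℕ) (S : Finset (ℕ × ℕ)) : Prop :=
  ∀ j ∈ Finset.Icc 1 m,
    (∀ p ∈ S, p.2 = j → (∀ q ∈ S, q.2 = j → p.1 ≤ q.1) →
        (p.1 ∈ R ∨ ∃ q ∈ S, q.1 = p.1 ∧ j < q.2)) ∧
    ((∀ p ∈ S, p.2 ≠ j) → (j + 1 ∈ R ∨ ∃ q ∈ S, q.1 = j + 1))

instance (m : ℕ) (R : Finset ℕ) : DecidablePred (Cond m R) := fun S => by
  unfold Cond; infer_instance

/-! ### Basic membership lemmas -/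

lemma mem_indexSet {n : ℕ} {p : ℕ × ℕ} : p ∈ indexSet n ↔ 1 ≤ p.1 ∧ p.1 ≤ p.2 ∧ p.2 ≤ n := by
  simp only [indexSet, mem_filter, mem_product, mem_Icc]; omega

lemma mem_cohook {n i j : ℕ} {q : ℕ × ℕ} :
    q ∈ cohook n i j ↔ ((1 ≤ q.1 ∧ q.1 ≤ n) ∧ 1 ≤ q.2 ∧ q.2 ≤ n) ∧
      ((q.2 = j ∧ q.1 < i) ∨ (q.1 = i ∧ j < q.2)) := by
  simp only [cohook, mem_filter, mem_product, mem_Icc]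

lemma Icc_one_succ (m : ℕ) : Finset.Icc 1 (m + 1) = insert (m + 1) (Finset.Icc 1 m) := by
  ext x; simp only [mem_Icc, mem_insert]; omega

lemma Pprod_succ (m : ℕ) : Pprod (m + 1) = (1 + X (m + 1)) * Pprod m := by
  rw [Pprod, Pprod, Icc_one_succ, Finset.prod_insert (by simp)]

lemma colC_mem {m : ℕ} {S : Finset (ℕ × ℕ)} {a : ℕ} :
    a ∈ (S.filter (fun p => p.2 = m)).image Prod.fst ↔ (a, m) ∈ S := by
  simp only [mem_image, mem_filter]
  constructor
  · rintro ⟨⟨x, y⟩, ⟨hx, rfl⟩, rfl⟩; exact hx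
  · intro h; exact ⟨(a, m), ⟨h, rfl⟩, rfl⟩

/-! ### The algebraic recursion lemma -/

lemma valid_insert {R : Finset ℕ} {b : Prop} {m : ℕ} {C : Finset ℕ}
    (hC : C ⊆ Finset.Icc 1 (m + 1)) :
    valid R b (insert (m + 2) C) ↔ valid R (m + 2 ∈ R) C := by
  unfold valid
  constructor
  · rintro ⟨h1, -⟩
    refine ⟨fun a haC hmin => h1 a (mem_insert_of_mem haC) ?_, fun hCe => ?_⟩
    · intro x hx
      rcases mem_insert.mp hx with rfl | hx
      · have := (mem_Icc.mp (hC haC)).2; omega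
      · exact hmin x hx
    · subst hCe
      refine h1 (m + 2) (mem_insert_self _ _) ?_
      intro x hx
      rcases mem_insert.mp hx with rfl | hx
      · exact le_rfl
      · simp at hx
  · rintro ⟨h1, h2⟩
    refine ⟨?_, by simp⟩
    intro a ha hmin
    rcases mem_insert.mp ha with rfl | haC
    · by_cases hCe : C = ∅
      · exact h2 hCe
      · obtain ⟨c, hc⟩ := nonempty_iff_ne_empty.mpr hCe
        have h1 := hmin c (mem_insert_of_mem hc)
        have h2 := (mem_Icc.mp (hC hc)).2
        omega
    · exact h1 a haC (fun x hx => hmin x (mem_insert_of_mem hx))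

lemma alg (R : Finset ℕ) (hR : 1 ∈ R) (m : ℕ) (b : Prop) [instb : Decidable b] :
    ∑ C ∈ (Finset.Icc 1 (m + 1)).powerset.filter (valid R b),
        (∏ i ∈ C, (X i : MvPolynomial ℕ ℤ)) * ∏ k ∈ Finset.Icc 1 m, Bfac (R ∪ C) k
      = (∏ k ∈ Finset.Icc 1 m, Bfac R k) * (Pprod (m + 1) - if b then 0 else 1) := by
  induction m generalizing b instb with
  | zero =>
      have h1 : Finset.Icc 1 (0 + 1) = {1} := rfl
      rw [Finset.sum_filter, h1, show ({1} : Finset ℕ) = insert 1 ∅ from rfl,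
        Finset.sum_powerset_insert (by simp), Finset.powerset_empty,
        Finset.sum_singleton, Finset.sum_singleton]
      have hvempty : valid R b ∅ ↔ b := by
        unfold valid; simp
      have hvone : valid R b {1} := by
        unfold valid
        refine ⟨fun a ha _ => ?_, by simp⟩
        simp only [mem_singleton] at ha; subst ha; exact hR
      rw [show insert 1 (∅ : Finset ℕ) = {1} from rfl]
      simp only [hvone, if_true, hvempty, Pprod_succ, Pprod]
      by_cases hb : b <;> simp [hb] <;> ring
  | succ m ih =>
      rw [Finset.sum_filter, Icc_one_succ (m + 1),
        Finset.sum_powerset_insert (by simp)]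
      have e1 : ∀ C ∈ (Finset.Icc 1 (m + 1)).powerset,
          (if valid R b C then
              (∏ i ∈ C, (X i : MvPolynomial ℕ ℤ)) * ∏ k ∈ Finset.Icc 1 (m + 1), Bfac (R ∪ C) k
            else 0)
          = (if valid R b C then
              (∏ i ∈ C, (X i : MvPolynomial ℕ ℤ)) * ∏ k ∈ Finset.Icc 1 m, Bfac (R ∪ C) k
            else 0) * Bfac R (m + 1) := by
        intro C hC
        have hmem : m + 2 ∈ R ∪ C ↔ m + 2 ∈ R := by
          simp only [mem_union, or_iff_left_iff_imp]
          intro h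
          have := (mem_Icc.mp ((mem_powerset.mp hC) h)).2; omega
        have hB : Bfac (R ∪ C) (m + 1) = Bfac R (m + 1) := by
          unfold Bfac; rw [if_congr hmem rfl rfl]
        rw [Icc_one_succ m, Finset.prod_insert (by simp), hB]
        split_ifs <;> ring
      rw [Finset.sum_congr rfl e1, ← Finset.sum_mul, ← Finset.sum_filter, ih b]
      have e2 : ∀ C ∈ (Finset.Icc 1 (m + 1)).powerset,
          (if valid R b (insert (m + 2) C) then
              (∏ i ∈ insert (m + 2) C, (X i : MvPolynomial ℕ ℤ)) *
                ∏ k ∈ Finset.Icc 1 (m + 1), Bfac (R ∪ insert (m + 2) C) k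
            else 0)
          = (if valid R (m + 2 ∈ R) C then
              (∏ i ∈ C, (X i : MvPolynomial ℕ ℤ)) * ∏ k ∈ Finset.Icc 1 m, Bfac (R ∪ C) k
            else 0) * (X (m + 2) * Pprod (m + 1)) := by
        intro C hC
        have hC' := mem_powerset.mp hC
        have hnot : m + 2 ∉ C := by
          intro h; have := (mem_Icc.mp (hC' h)).2; omega
        rw [if_congr (valid_insert hC') rfl rfl, Finset.prod_insert hnot]
        have hBtop : Bfac (R ∪ insert (m + 2) C) (m + 1) = Pprod (m + 1) := by
          unfold Bfac
          rw [if_pos (by simp), sub_zero]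
        have hBrest : ∀ k ∈ Finset.Icc 1 m,
            Bfac (R ∪ insert (m + 2) C) k = Bfac (R ∪ C) k := by
          intro k hk
          have hk2 := (mem_Icc.mp hk).2
          unfold Bfac
          have : k + 1 ∈ R ∪ insert (m + 2) C ↔ k + 1 ∈ R ∪ C := by
            simp only [mem_union, mem_insert]
            constructor
            · rintro (h | h | h)
              · exact Or.inl h
              · omega
              · exact Or.inr h
            · rintro (h | h)
              · exact Or.inl h
              · exact Or.inr (Or.inr h)
          rw [if_congr this rfl rfl]
        rw [Icc_one_succ m, Finset.prod_insert (by simp), hBtop,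
          Finset.prod_congr rfl hBrest]
        split_ifs <;> ring
      rw [Finset.sum_congr rfl e2, ← Finset.sum_mul, ← Finset.sum_filter, ih (m + 2 ∈ R)]
      rw [Icc_one_succ m, Finset.prod_insert (by simp), Pprod_succ (m + 1)]
      have : Bfac R (m + 1) = Pprod (m + 1) - if m + 2 ∈ R then 0 else 1 := rfl
      rw [this]
      ring

/-! ### Splitting off the top column -/

lemma cond_split (m : ℕ) (R : Finset ℕ) (S : Finset (ℕ × ℕ)) (hS : S ⊆ indexSet (m + 1)) :
    Cond (m + 1) R S ↔
      valid R (m + 2 ∈ R) ((S.filter (fun p => p.2 = m + 1)).image Prod.fst) ∧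
      Cond m (R ∪ (S.filter (fun p => p.2 = m + 1)).image Prod.fst)
        (S.filter (fun p => ¬ p.2 = m + 1)) := by
  set C := (S.filter (fun p => p.2 = m + 1)).image Prod.fst with hCdef
  have hbound : ∀ p ∈ S, 1 ≤ p.1 ∧ p.1 ≤ p.2 ∧ p.2 ≤ m + 1 := fun p hp => mem_indexSet.mp (hS hp)
  constructor
  · intro h
    have htop := h (m + 1) (by simp)
    refine ⟨⟨?_, ?_⟩, ?_⟩
    · -- min of C lies in R
      intro a haC hmin
      have haS : (a, m + 1) ∈ S := colC_mem.mp haC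
      have := htop.1 (a, m + 1) haS rfl ?_
      · rcases this with h' | ⟨q, hq, _, hq2⟩
        · exact h'
        · have := (hbound q hq).2.2; omega
      · intro q hq hq2
        exact hmin q.1 (colC_mem.mpr (by rwa [show (q.1, m + 1) = q from Prod.ext rfl hq2.symm]))
    · -- C empty → m+2 ∈ R
      intro hCe
      have hempty : ∀ p ∈ S, p.2 ≠ m + 1 := by
        intro p hp hp2
        have : p.1 ∈ C := colC_mem.mpr (by rwa [show (p.1, m + 1) = p from Prod.ext rfl hp2.symm])
        simp [hCe] at this
      rcases htop.2 hempty with h' | ⟨q, hq, hq1⟩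
      · exact h'
      · have := (hbound q hq); omega
    · -- Cond m (R ∪ C) rest
      intro j hj
      have hj' : j ∈ Finset.Icc 1 (m + 1) := by simp only [mem_Icc] at hj ⊢; omega
      have hjne : j ≠ m + 1 := by simp only [mem_Icc] at hj; omega
      constructor
      · intro p hp hp2 hmin
        simp only [mem_filter] at hp
        have hminS : ∀ q ∈ S, q.2 = j → p.1 ≤ q.1 := by
          intro q hq hq2
          exact hmin q (mem_filter.mpr ⟨hq, by rw [hq2]; exact hjne⟩) hq2
        rcases (h j hj').1 p hp.1 hp2 hminS with h' | ⟨q, hq, hq1, hq2⟩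
        · exact Or.inl (mem_union_left _ h')
        · by_cases hqtop : q.2 = m + 1
          · refine Or.inl (mem_union_right _ ?_)
            rw [← hq1]
            exact colC_mem.mpr (by rwa [show (q.1, m + 1) = q from Prod.ext rfl hqtop.symm])
          · exact Or.inr ⟨q, mem_filter.mpr ⟨hq, hqtop⟩, hq1, hq2⟩
      · intro hempty
        have hemptyS : ∀ p ∈ S, p.2 ≠ j := by
          intro p hp hp2
          exact hempty p (mem_filter.mpr ⟨hp, by rw [hp2]; exact hjne⟩) hp2
        rcases (h j hj').2 hemptyS with h' | ⟨q, hq, hq1⟩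
        · exact Or.inl (mem_union_left _ h')
        · by_cases hqtop : q.2 = m + 1
          · refine Or.inl (mem_union_right _ ?_)
            rw [← hq1]
            exact colC_mem.mpr (by rwa [show (q.1, m + 1) = q from Prod.ext rfl hqtop.symm])
          · exact Or.inr ⟨q, mem_filter.mpr ⟨hq, hqtop⟩, hq1⟩
  · rintro ⟨⟨hv1, hv2⟩, hc⟩
    intro j hj
    by_cases hjtop : j = m + 1
    · subst hjtop
      constructor
      · intro p hp hp2 hmin
        left
        refine hv1 p.1 (colC_mem.mpr (by rwa [show (p.1, m + 1) = p from Prod.ext rfl hp2.symm])) ?_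
        intro x hxC
        exact hmin (x, m + 1) (colC_mem.mp hxC) rfl
      · intro hempty
        left
        refine hv2 ?_
        rw [eq_empty_iff_forall_notMem]
        intro a haC
        exact hempty (a, m + 1) (colC_mem.mp haC) rfl
    · have hj' : j ∈ Finset.Icc 1 m := by simp only [mem_Icc] at hj ⊢; omega
      have hjlt : j < m + 1 := by simp only [mem_Icc] at hj'; omega
      constructor
      · intro p hp hp2 hmin
        have hpne : p.2 ≠ m + 1 := by rw [hp2]; exact hjtop
        have hp' : p ∈ S.filter (fun p => ¬ p.2 = m + 1) := mem_filter.mpr ⟨hp, hpne⟩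
        have hmin' : ∀ q ∈ S.filter (fun p => ¬ p.2 = m + 1), q.2 = j → p.1 ≤ q.1 := by
          intro q hq hq2
          exact hmin q (mem_filter.mp hq).1 hq2
        rcases (hc j hj').1 p hp' hp2 hmin' with h' | ⟨q, hq, hq1, hq2⟩
        · rcases mem_union.mp h' with h'' | h''
          · exact Or.inl h''
          · exact Or.inr ⟨(p.1, m + 1), colC_mem.mp h'', rfl, hjlt⟩
        · exact Or.inr ⟨q, (mem_filter.mp hq).1, hq1, hq2⟩
      · intro hempty
        have hempty' : ∀ p ∈ S.filter (fun p => ¬ p.2 = m + 1), p.2 ≠ j := by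
          intro p hp
          exact hempty p (mem_filter.mp hp).1
        rcases (hc j hj').2 hempty' with h' | ⟨q, hq, hq1⟩
        · rcases mem_union.mp h' with h'' | h''
          · exact Or.inl h''
          · exact Or.inr ⟨(j + 1, m + 1), colC_mem.mp h'', rfl⟩
        · exact Or.inr ⟨q, (mem_filter.mp hq).1, hq1⟩

lemma roundtrip_col {m : ℕ} {C : Finset ℕ} {S' : Finset (ℕ × ℕ)}
    (hS' : S' ⊆ indexSet m) :
    ((S' ∪ C.image (fun i => (i, m + 1))).filter (fun p => p.2 = m + 1)).image Prod.fst = C := by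
  ext a
  rw [colC_mem, mem_union]
  constructor
  · rintro (h | h)
    · have := (mem_indexSet.mp (hS' h)).2.2; omega
    · simp only [mem_image] at h
      obtain ⟨i, hi, heq⟩ := h
      have : i = a := congrArg Prod.fst heq
      subst this; exact hi
  · intro h
    right
    exact mem_image.mpr ⟨a, h, rfl⟩

lemma roundtrip_rest {m : ℕ} {C : Finset ℕ} {S' : Finset (ℕ × ℕ)}
    (hS' : S' ⊆ indexSet m) :
    (S' ∪ C.image (fun i => (i, m + 1))).filter (fun p => ¬ p.2 = m + 1) = S' := by
  ext p
  simp only [mem_filter, mem_union, mem_image]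
  constructor
  · rintro ⟨h | ⟨i, hi, heq⟩, hne⟩
    · exact h
    · exact absurd (congrArg Prod.snd heq.symm) hne
  · intro h
    have := (mem_indexSet.mp (hS' h)).2.2
    exact ⟨Or.inl h, by omega⟩

lemma roundtrip_self {m : ℕ} (S : Finset (ℕ × ℕ)) :
    S.filter (fun p => ¬ p.2 = m + 1) ∪
      ((S.filter (fun p => p.2 = m + 1)).image Prod.fst).image (fun i => (i, m + 1)) = S := by
  ext p
  simp only [mem_union, mem_filter, mem_image]
  constructor
  · rintro (⟨h, -⟩ | ⟨i, hi, heq⟩)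
    · exact h
    · obtain ⟨q, ⟨hq, hq2⟩, hq1⟩ := hi
      have : q = p := by
        rw [← heq]; exact Prod.ext hq1 hq2
      rwa [← this]
  · intro h
    by_cases h2 : p.2 = m + 1
    · refine Or.inr ⟨p.1, ⟨p, ⟨h, h2⟩, rfl⟩, Prod.ext rfl h2.symm⟩
    · exact Or.inl ⟨h, h2⟩

/-! ### The main generating-function recursion -/

lemma gen (m : ℕ) : ∀ (R : Finset ℕ), 1 ∈ R →
    ∑ S ∈ (indexSet m).powerset.filter (Cond m R), ∏ p ∈ S, (X p.1 : MvPolynomial ℕ ℤ)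
      = ∏ k ∈ Finset.Icc 1 m, Bfac R k := by
  induction m with
  | zero =>
      intro R hR
      have h0 : indexSet 0 = ∅ := by
        rw [eq_empty_iff_forall_notMem]
        intro p hp
        have := mem_indexSet.mp hp; omega
      have hc : Cond 0 R ∅ := by intro j hj; simp at hj
      rw [h0, Finset.powerset_empty, Finset.filter_singleton, if_pos hc,
        Finset.sum_singleton, Finset.prod_empty]
      simp
  | succ m ih =>
      intro R hR
      have key : ∑ S ∈ (indexSet (m + 1)).powerset.filter (Cond (m + 1) R),
            ∏ p ∈ S, (X p.1 : MvPolynomial ℕ ℤ)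
          = ∑ x ∈ ((Finset.Icc 1 (m + 1)).powerset.filter (valid R (m + 2 ∈ R))).sigma
                (fun C => (indexSet m).powerset.filter (Cond m (R ∪ C))),
              (∏ i ∈ x.1, (X i : MvPolynomial ℕ ℤ)) * ∏ p ∈ x.2, (X p.1 : MvPolynomial ℕ ℤ) := by
        refine Finset.sum_nbij'
          (i := fun S => ⟨(S.filter (fun p => p.2 = m + 1)).image Prod.fst,
            S.filter (fun p => ¬ p.2 = m + 1)⟩)
          (j := fun x => x.2 ∪ x.1.image (fun i => (i, m + 1))) ?_ ?_ ?_ ?_ ?_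
        · intro S hS
          rw [mem_filter, mem_powerset] at hS
          obtain ⟨hsub, hcond⟩ := hS
          rw [cond_split m R S hsub] at hcond
          rw [mem_sigma, mem_filter, mem_powerset, mem_filter, mem_powerset]
          refine ⟨⟨?_, hcond.1⟩, ?_, hcond.2⟩
          · intro a ha
            have := mem_indexSet.mp (hsub (colC_mem.mp ha))
            rw [mem_Icc]; omega
          · intro p hp
            rw [mem_filter] at hp
            have := mem_indexSet.mp (hsub hp.1)
            rw [mem_indexSet]
            have := hp.2
            constructor
            · omega
            constructor
            · omega
            · omega
        · rintro ⟨C, S'⟩ hx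
          rw [mem_sigma, mem_filter, mem_powerset, mem_filter, mem_powerset] at hx
          obtain ⟨⟨hCsub, hCval⟩, hS'sub, hS'cond⟩ := hx
          rw [mem_filter, mem_powerset]
          have hsub : S' ∪ C.image (fun i => (i, m + 1)) ⊆ indexSet (m + 1) := by
            intro p hp
            rcases mem_union.mp hp with h | h
            · have := mem_indexSet.mp (hS'sub h)
              rw [mem_indexSet]; omega
            · obtain ⟨i, hi, heq⟩ := mem_image.mp h
              have := mem_Icc.mp (hCsub hi)
              rw [← heq, mem_indexSet]
              simp; omega
          refine ⟨hsub, ?_⟩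
          rw [cond_split m R _ hsub, roundtrip_col hS'sub, roundtrip_rest hS'sub]
          exact ⟨hCval, hS'cond⟩
        · intro S hS
          simp only
          exact roundtrip_self S
        · rintro ⟨C, S'⟩ hx
          rw [mem_sigma, mem_filter, mem_powerset, mem_filter, mem_powerset] at hx
          obtain ⟨⟨hCsub, -⟩, hS'sub, -⟩ := hx
          simp only
          rw [roundtrip_col hS'sub, roundtrip_rest hS'sub]
        · intro S hS
          simp only
          rw [← Finset.prod_filter_mul_prod_filter_not S (fun p => p.2 = m + 1)
            (fun p => (X p.1 : MvPolynomial ℕ ℤ))]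
          congr 1
          rw [Finset.prod_image]
          intro x hx y hy hxy
          rw [Finset.mem_coe, mem_filter] at hx hy
          exact Prod.ext hxy (hx.2.trans hy.2.symm)
      rw [key, Finset.sum_sigma]
      have step2 : ∀ C ∈ (Finset.Icc 1 (m + 1)).powerset.filter (valid R (m + 2 ∈ R)),
          ∑ S' ∈ (indexSet m).powerset.filter (Cond m (R ∪ C)),
              (∏ i ∈ C, (X i : MvPolynomial ℕ ℤ)) * ∏ p ∈ S', (X p.1 : MvPolynomial ℕ ℤ)
            = (∏ i ∈ C, (X i : MvPolynomial ℕ ℤ)) * ∏ k ∈ Finset.Icc 1 m, Bfac (R ∪ C) k := by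
        intro C hC
        rw [← Finset.mul_sum, ih (R ∪ C) (mem_union_left _ hR)]
      rw [Finset.sum_congr rfl step2, alg R hR m (m + 2 ∈ R)]
      rw [Icc_one_succ m, Finset.prod_insert (by simp)]
      have : Bfac R (m + 1) = Pprod (m + 1) - if m + 2 ∈ R then 0 else 1 := rfl
      rw [this]; ring

/-! ### FB-configurations are exactly `Cond n {1}` -/

lemma FB_iff (n : ℕ) (hn : 0 < n) (S : Finset (ℕ × ℕ)) (hS : S ⊆ indexSet n) :
    IsFB n S ↔ Cond n {1} S := by
  have hbound : ∀ p ∈ S, 1 ≤ p.1 ∧ p.1 ≤ p.2 ∧ p.2 ≤ n := fun p hp => mem_indexSet.mp (hS hp)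
  constructor
  · rintro ⟨h0, h1, h2⟩
    intro j hj
    have hj' := mem_Icc.mp hj
    constructor
    · intro p hp hp2 hmin
      by_cases hptop : p = (1, n)
      · left; rw [hptop]; exact mem_singleton_self 1
      · obtain ⟨q, hq⟩ := h1 p hp hptop
        rw [mem_inter, mem_cohook] at hq
        rcases hq.1.2 with ⟨hq2, hq1⟩ | ⟨hq1, hq2⟩
        · have := hmin q hq.2 (by rw [hq2, hp2]); omega
        · exact Or.inr ⟨q, hq.2, hq1, by rwa [← hp2]⟩
    · intro hempty
      have hjn : j ≠ n := fun hjeq => hempty (1, n) h0 hjeq.symm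
      have hjk : j + 1 ∈ Finset.Icc 2 n := by rw [mem_Icc]; omega
      obtain ⟨q, hq⟩ := h2 (j + 1) hjk
      rw [mem_inter, mem_cohook] at hq
      have hj1 : j + 1 - 1 = j := by omega
      rw [hj1] at hq
      rcases hq.1.2 with ⟨hq2, -⟩ | ⟨hq1, -⟩
      · exact absurd hq2 (hempty q hq.2)
      · exact Or.inr ⟨q, hq.2, hq1⟩
  · intro h
    have h0 : (1, n) ∈ S := by
      have hne : ¬ (∀ p ∈ S, p.2 ≠ n) := by
        intro hempty
        rcases (h n (by rw [mem_Icc]; omega)).2 hempty with h' | ⟨q, hq, hq1⟩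
        · rw [mem_singleton] at h'; omega
        · have := hbound q hq; omega
      push_neg at hne
      obtain ⟨p₀, hp₀, hp₀2⟩ := hne
      -- take the minimal first coordinate in column n
      set T := (S.filter (fun p => p.2 = n)).image Prod.fst with hT
      have hTne : T.Nonempty := ⟨p₀.1, mem_image.mpr ⟨p₀, mem_filter.mpr ⟨hp₀, hp₀2⟩, rfl⟩⟩
      set a := T.min' hTne with ha
      have haT : a ∈ T := T.min'_mem hTne
      have haS : (a, n) ∈ S := colC_mem.mp haT
      have hamin : ∀ q ∈ S, q.2 = n → a ≤ q.1 := by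
        intro q hq hq2
        exact T.min'_le q.1 (mem_image.mpr ⟨q, mem_filter.mpr ⟨hq, hq2⟩, rfl⟩)
      rcases (h n (by rw [mem_Icc]; omega)).1 (a, n) haS rfl
          (fun q hq hq2 => hamin q hq hq2) with h' | ⟨q, hq, -, hq2⟩
      · rw [mem_singleton] at h'; rwa [← h']
      · have := hbound q hq; omega
    refine ⟨h0, ?_, ?_⟩
    · intro p hp hptop
      have hpb := hbound p hp
      by_cases habove : ∃ q ∈ S, q.2 = p.2 ∧ q.1 < p.1
      · obtain ⟨q, hq, hq2, hq1⟩ := habove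
        refine ⟨q, mem_inter.mpr ⟨?_, hq⟩⟩
        rw [mem_cohook]
        have := hbound q hq
        exact ⟨⟨⟨by omega, by omega⟩, by omega, by omega⟩, Or.inl ⟨hq2, hq1⟩⟩
      · push_neg at habove
        have hmin : ∀ q ∈ S, q.2 = p.2 → p.1 ≤ q.1 := by
          intro q hq hq2
          have := habove q hq hq2
          omega
        rcases (h p.2 (by rw [mem_Icc]; omega)).1 p hp rfl hmin with h' | ⟨q, hq, hq1, hq2⟩
        · rw [mem_singleton] at h'
          have hp2n : p.2 ≠ n := by
            intro hc
            exact hptop (Prod.ext h' hc)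
          refine ⟨(1, n), mem_inter.mpr ⟨?_, h0⟩⟩
          rw [mem_cohook]
          exact ⟨⟨⟨le_rfl, hn⟩, by omega, le_rfl⟩, Or.inr ⟨h'.symm, by omega⟩⟩
        · refine ⟨q, mem_inter.mpr ⟨?_, hq⟩⟩
          rw [mem_cohook]
          have := hbound q hq
          exact ⟨⟨⟨by omega, by omega⟩, by omega, by omega⟩, Or.inr ⟨hq1, hq2⟩⟩
    · intro k hk
      have hk' := mem_Icc.mp hk
      by_cases hcol : ∃ q ∈ S, q.2 = k - 1
      · obtain ⟨q, hq, hq2⟩ := hcol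
        refine ⟨q, mem_inter.mpr ⟨?_, hq⟩⟩
        rw [mem_cohook]
        have := hbound q hq
        exact ⟨⟨⟨by omega, by omega⟩, by omega, by omega⟩, Or.inl ⟨hq2, by omega⟩⟩
      · push_neg at hcol
        have hempty : ∀ p ∈ S, p.2 ≠ k - 1 := hcol
        rcases (h (k - 1) (by rw [mem_Icc]; omega)).2 hempty with h' | ⟨q, hq, hq1⟩
        · rw [mem_singleton] at h'; omega
        · refine ⟨q, mem_inter.mpr ⟨?_, hq⟩⟩
          rw [mem_cohook]
          have := hbound q hq
          have hq1' : q.1 = k := by omega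
          exact ⟨⟨⟨by omega, by omega⟩, by omega, by omega⟩, Or.inr ⟨hq1', by omega⟩⟩

open MvPolynomial in
/-- The sum over all FB-configurations `S` of the weight `Π_{r=1}^n x_r^{t_r(S)}`,
where `t_r(S)` is the number of elements of `S` in row `r`, equals the polynomial
`h_n(x_1,…,x_n) = Π_{r=1}^n (Π_{s=1}^r (1+x_s) − 1)` (variables indexed by `1,…,n`). -/
theorem FB_weight_sum_eq_h (n : ℕ) (hn : 0 < n) :
    ∑ S ∈ (indexSet n).powerset.filter (IsFB n),
        ∏ r ∈ Finset.Icc 1 n, (X r : MvPolynomial ℕ ℤ) ^ (S.filter (fun p => p.1 = r)).card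
      = ∏ r ∈ Finset.Icc 1 n, ((∏ s ∈ Finset.Icc 1 r, (1 + (X s : MvPolynomial ℕ ℤ))) - 1) := by
  have hfil : (indexSet n).powerset.filter (IsFB n)
      = (indexSet n).powerset.filter (Cond n {1}) :=
    Finset.filter_congr (fun S hS => FB_iff n hn S (Finset.mem_powerset.mp hS))
  rw [hfil]
  have hsummand : ∀ S ∈ (indexSet n).powerset.filter (Cond n {1}),
      ∏ r ∈ Finset.Icc 1 n, (X r : MvPolynomial ℕ ℤ) ^ (S.filter (fun p => p.1 = r)).card
        = ∏ p ∈ S, (X p.1 : MvPolynomial ℕ ℤ) := by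
    intro S hS
    have hsub := Finset.mem_powerset.mp (Finset.mem_filter.mp hS).1
    rw [← Finset.prod_fiberwise_of_maps_to (s := S) (t := Finset.Icc 1 n)
      (g := fun p => p.1)
      (fun p hp => by
        show p.1 ∈ Finset.Icc 1 n
        rw [mem_Icc]; have := mem_indexSet.mp (hsub hp); omega)
      (fun p => (X p.1 : MvPolynomial ℕ ℤ))]
    refine Finset.prod_congr rfl (fun r _ => ?_)
    rw [Finset.prod_congr rfl (fun p hp => by rw [(Finset.mem_filter.mp hp).2]),
      Finset.prod_const]
  rw [Finset.sum_congr rfl hsummand, gen n {1} (mem_singleton_self 1)]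
  refine Finset.prod_congr rfl (fun k hk => ?_)
  have hk' := mem_Icc.mp hk
  unfold Bfac Pprod
  rw [if_neg (by rw [mem_singleton]; omega)]
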